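/- For τ > 0, the function x_d ↦ (m⁴ + 4m² + 1)/(m - 1)⁴ with m = e^{x_d/τ} is strictly decreasing in x_d on (0, ∞). Hence increasing the sampling spacing x_d strictly reduces the OCV noise amplification factor. -/
import Mathlib


open Real

lemma key_poly_ineq (a b : ℝ) (ha : 1 < a) (hb : a < b) :
    (b^4 + 4*b^2 + 1) * (a-1)^4 < (a^4 + 4*a^2 + 1) * (b-1)^4 := by
  have h1 : 0 < a - 1 := by linarith
  have h2 : 0 < b - 1 := by linarith
  have h3 : 0 < b - a := by linarith
  nlinarith [mul_pos h3 (pow_pos h2 3), mul_pos h3 (mul_pos h1 (pow_pos h2 2)),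
    mul_pos h3 (mul_pos h1 (pow_pos h2 3)), mul_pos h3 (mul_pos (pow_pos h1 2) h2),
    mul_pos h3 (mul_pos (pow_pos h1 2) (pow_pos h2 2)),
    mul_pos h3 (mul_pos (pow_pos h1 2) (pow_pos h2 3)),
    mul_pos h3 (pow_pos h1 3), mul_pos h3 (mul_pos (pow_pos h1 3) h2),
    mul_pos h3 (mul_pos (pow_pos h1 3) (pow_pos h2 2)),
    mul_pos h3 (mul_pos (pow_pos h1 3) (pow_pos h2 3))]

theorem noise_amplification_strictAnti_in_spacing (τ : ℝ) (hτ : 0 < τ) :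
    StrictAntiOn
      (fun x_d : ℝ =>
        ((exp (x_d / τ))^4 + 4 * (exp (x_d / τ))^2 + 1) / (exp (x_d / τ) - 1)^4)
      (Set.Ioi 0) := by
  intro x hx y hy hxy
  simp only [Set.mem_Ioi] at hx hy
  set a := exp (x / τ) with hadef
  set b := exp (y / τ) with hbdef
  have ha : 1 < a := by
    rw [hadef, show (1:ℝ) = exp 0 by simp]
    exact exp_lt_exp.2 (div_pos hx hτ)
  have hab : a < b := by
    rw [hadef, hbdef]
    exact exp_lt_exp.2 (by exact div_lt_div_of_pos_right hxy hτ)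
  have hb : 1 < b := lt_trans ha hab
  have hpa : 0 < (a - 1)^4 := pow_pos (by linarith) 4
  have hpb : 0 < (b - 1)^4 := pow_pos (by linarith) 4
  simp only
  rw [div_lt_div_iff₀ hpb hpa]
  have := key_poly_ineq a b ha hab
  nlinarith [this]
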